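/- Suppose F and G have finite and equal second moments, i.e. ∫ x² dF(x) = ∫ x² dν(x) < ∞, and that for some constants A, B > 0 one has |G(x)| ≤ A e^{−x²/B} for all x ≤ 0 and |1 − G(x)| ≤ A e^{−x²/B} for all x ≥ 0. If Δ > 0, then the Kantorovich distance W₁(F, G) = ∫_{−∞}^{∞} |F(x) − G(x)| dx satisfies W₁(F, G) ≤ 16.02 √(AB) · Δ · log^{1/2}(e + 1/Δ). -/

import Mathlib

open MeasureTheory Set

lemma lintegral_Ioc_ofReal (c : ℝ) (hc : 0 ≤ c) :
    ∫⁻ x in Set.Ioc 0 c, ENNReal.ofReal x = ENNReal.ofReal (c ^ 2 / 2) := by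
  rw [← ofReal_integral_eq_lintegral_ofReal]
  · congr 1
    rw [← intervalIntegral.integral_of_le hc, integral_id]
    ring
  · exact (intervalIntegral.intervalIntegrable_id (a := 0) (b := c) (μ := volume)).1
  · filter_upwards [self_mem_ae_restrict measurableSet_Ioc] with x hx
    exact le_of_lt hx.1

lemma layer_cake (ν : Measure ℝ) [IsFiniteMeasure ν] :
    ∫⁻ x in Set.Ioi (0:ℝ), ENNReal.ofReal x * (ν (Set.Ioi x) + ν (Set.Iic (-x))) =
      ∫⁻ t, ENNReal.ofReal (t ^ 2 / 2) ∂ν := by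
  set S : Set (ℝ × ℝ) := {p : ℝ × ℝ | p.1 < p.2 ∨ p.2 ≤ -p.1} with hS
  have hSm : MeasurableSet S :=
    (measurableSet_lt measurable_fst measurable_snd).union
      (measurableSet_le measurable_snd measurable_fst.neg)
  set f : ℝ → ℝ → ENNReal := fun x t => S.indicator (fun p => ENNReal.ofReal p.1) (x, t)
    with hf
  have hfm : AEMeasurable (Function.uncurry f) ((volume.restrict (Set.Ioi (0:ℝ))).prod ν) := by
    apply Measurable.aemeasurable
    have : Function.uncurry f = S.indicator (fun p => ENNReal.ofReal p.1) := by
      ext p; rcases p with ⟨x, t⟩; rfl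
    rw [this]
    exact (measurable_fst.ennreal_ofReal).indicator hSm
  have hsets : ∀ x : ℝ, 0 < x → ν (Set.Ioi x) + ν (Set.Iic (-x)) =
      ν {t : ℝ | x < t ∨ t ≤ -x} := by
    intro x hx
    have he : {t : ℝ | x < t ∨ t ≤ -x} = Set.Ioi x ∪ Set.Iic (-x) := by
      ext t; simp [Set.mem_Ioi, Set.mem_Iic]
    rw [he, measure_union _ measurableSet_Iic]
    rw [Set.disjoint_left]
    intro t ht1 ht2
    simp only [Set.mem_Ioi] at ht1
    simp only [Set.mem_Iic] at ht2
    linarith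
  calc ∫⁻ x in Set.Ioi (0:ℝ), ENNReal.ofReal x * (ν (Set.Ioi x) + ν (Set.Iic (-x)))
      = ∫⁻ x in Set.Ioi (0:ℝ), ∫⁻ t, f x t ∂ν := by
        apply setLIntegral_congr_fun measurableSet_Ioi
        intro x hx
        have h1 : ∀ t : ℝ, f x t =
            ({t : ℝ | x < t ∨ t ≤ -x}.indicator (fun _ => ENNReal.ofReal x) t) := by
          intro t
          simp only [hf, hS, Set.indicator_apply, Set.mem_setOf_eq]
        simp_rw [h1]
        have hm2 : MeasurableSet {t : ℝ | x < t ∨ t ≤ -x} := by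
          have he : {t : ℝ | x < t ∨ t ≤ -x} = Set.Ioi x ∪ Set.Iic (-x) := by
            ext t; simp [Set.mem_Ioi, Set.mem_Iic]
          rw [he]; exact measurableSet_Ioi.union measurableSet_Iic
        rw [lintegral_indicator hm2 _, setLIntegral_const, hsets x hx]
      _ = ∫⁻ t, ∫⁻ x, f x t ∂(volume.restrict (Set.Ioi (0:ℝ))) ∂ν :=
        lintegral_lintegral_swap hfm
      _ = ∫⁻ t, ENNReal.ofReal (t ^ 2 / 2) ∂ν := by
        apply lintegral_congr
        intro t
        show ∫⁻ x in Set.Ioi (0:ℝ), f x t = ENNReal.ofReal (t ^ 2 / 2)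
        have h1 : ∀ x : ℝ, f x t =
            ({x : ℝ | x < t ∨ t ≤ -x}.indicator (fun x => ENNReal.ofReal x) x) := by
          intro x
          simp only [hf, hS, Set.indicator_apply, Set.mem_setOf_eq]
        simp_rw [h1]
        have hm2 : MeasurableSet {x : ℝ | x < t ∨ t ≤ -x} := by
          have he : {x : ℝ | x < t ∨ t ≤ -x} = Set.Iio t ∪ Set.Iic (-t) := by
            ext x
            simp only [Set.mem_setOf_eq, Set.mem_union, Set.mem_Iio, Set.mem_Iic]
            constructor
            · rintro (h | h); · exact Or.inl h
              · exact Or.inr (by linarith)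
            · rintro (h | h); · exact Or.inl h
              · exact Or.inr (by linarith)
          rw [he]; exact measurableSet_Iio.union measurableSet_Iic
        rw [lintegral_indicator hm2 _]
        rw [Measure.restrict_restrict hm2]
        rcases le_or_gt t 0 with ht | ht
        · have he : {x : ℝ | x < t ∨ t ≤ -x} ∩ Set.Ioi 0 = Set.Ioc 0 (-t) := by
            ext x
            simp only [Set.mem_inter_iff, Set.mem_setOf_eq, Set.mem_Ioi, Set.mem_Ioc]
            constructor
            · rintro ⟨h1 | h1, h2⟩
              · linarith
              · exact ⟨h2, by linarith⟩
            · rintro ⟨h1, h2⟩; exact ⟨Or.inr (by linarith), h1⟩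
          rw [he, lintegral_Ioc_ofReal _ (by linarith)]
          congr 1; ring
        · have he : {x : ℝ | x < t ∨ t ≤ -x} ∩ Set.Ioi 0 = Set.Ioo 0 t := by
            ext x
            simp only [Set.mem_inter_iff, Set.mem_setOf_eq, Set.mem_Ioi, Set.mem_Ioo]
            constructor
            · rintro ⟨h1 | h1, h2⟩
              · exact ⟨h2, h1⟩
              · linarith
            · rintro ⟨h1, h2⟩; exact ⟨Or.inl h2, h1⟩
          rw [he, ← lintegral_Ioc_ofReal t (le_of_lt ht)]
          exact setLIntegral_congr Ioo_ae_eq_Ioc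

lemma measurable_tail (ν : Measure ℝ) [IsFiniteMeasure ν] :
    Measurable (fun x : ℝ => (ν (Set.Iic x)).toReal) := by
  apply Monotone.measurable
  intro a b hab
  exact ENNReal.toReal_mono (measure_ne_top ν _) (measure_mono (Set.Iic_subset_Iic.2 hab))

lemma toReal_Ioi (ν : Measure ℝ) [IsFiniteMeasure ν] (x : ℝ) :
    (ν (Set.Ioi x)).toReal = (ν Set.univ).toReal - (ν (Set.Iic x)).toReal := by
  have h : ν (Set.Ioi x) = ν Set.univ - ν (Set.Iic x) := by
    rw [← Set.compl_Iic, measure_compl measurableSet_Iic (measure_ne_top ν _)]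
  rw [h, ENNReal.toReal_sub_of_le (measure_mono (Set.subset_univ _)) (measure_ne_top ν _)]

lemma measurable_g (ν : Measure ℝ) [IsFiniteMeasure ν] :
    Measurable (fun x : ℝ => x * ((ν (Set.Ioi x)).toReal + (ν (Set.Iic (-x))).toReal)) := by
  apply measurable_id.mul
  apply Measurable.add
  · simp_rw [toReal_Ioi ν]
    exact measurable_const.sub (measurable_tail ν)
  · exact (measurable_tail ν).comp measurable_neg

lemma layer_cake_real (ν : Measure ℝ) [IsFiniteMeasure ν]
    (h2 : Integrable (fun x : ℝ => x ^ 2) ν) :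
    IntegrableOn (fun x : ℝ => x * ((ν (Set.Ioi x)).toReal + (ν (Set.Iic (-x))).toReal))
      (Set.Ioi 0) volume ∧
    ∫ x in Set.Ioi (0:ℝ), x * ((ν (Set.Ioi x)).toReal + (ν (Set.Iic (-x))).toReal) =
      (1/2) * ∫ t, t ^ 2 ∂ν := by
  set g : ℝ → ℝ := fun x => x * ((ν (Set.Ioi x)).toReal + (ν (Set.Iic (-x))).toReal) with hg
  have hgm : Measurable g := measurable_g ν
  have hgnn : ∀ x : ℝ, x ∈ Set.Ioi (0:ℝ) → 0 ≤ g x := by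
    intro x hx
    exact mul_nonneg (le_of_lt hx) (add_nonneg ENNReal.toReal_nonneg ENNReal.toReal_nonneg)
  have hgae : 0 ≤ᵐ[volume.restrict (Set.Ioi (0:ℝ))] g := by
    filter_upwards [self_mem_ae_restrict measurableSet_Ioi] with x hx using hgnn x hx
  have h2' : Integrable (fun t : ℝ => t ^ 2 / 2) ν := h2.div_const 2
  have h2nn : 0 ≤ᵐ[ν] fun t : ℝ => t ^ 2 / 2 :=
    Filter.Eventually.of_forall fun t => by positivity
  have key : ∫⁻ x in Set.Ioi (0:ℝ), ENNReal.ofReal (g x) =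
      ENNReal.ofReal (∫ t, t ^ 2 / 2 ∂ν) := by
    rw [ofReal_integral_eq_lintegral_ofReal h2' h2nn, ← layer_cake ν]
    apply setLIntegral_congr_fun measurableSet_Ioi
    intro x hx
    rw [hg]
    beta_reduce
    rw [ENNReal.ofReal_mul (le_of_lt hx)]
    congr 1
    rw [ENNReal.ofReal_add ENNReal.toReal_nonneg ENNReal.toReal_nonneg,
      ENNReal.ofReal_toReal (measure_ne_top ν _), ENNReal.ofReal_toReal (measure_ne_top ν _)]
  have hint : IntegrableOn g (Set.Ioi 0) volume := by
    refine ⟨hgm.aestronglyMeasurable, ?_⟩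
    rw [hasFiniteIntegral_iff_ofReal hgae, key]
    exact ENNReal.ofReal_lt_top
  refine ⟨hint, ?_⟩
  rw [integral_eq_lintegral_of_nonneg_ae hgae hgm.aestronglyMeasurable, key,
    ENNReal.toReal_ofReal (integral_nonneg fun t => by positivity)]
  rw [← integral_const_mul]
  congr 1; ext t; ring

lemma gauss_deriv (B : ℝ) (hB : 0 < B) (x : ℝ) :
    HasDerivAt (fun y : ℝ => -(B/2) * Real.exp (-y^2/B)) (x * Real.exp (-x^2/B)) x := by
  have h1 : HasDerivAt (fun y : ℝ => -y^2/B) (-(2*x)/B) x := by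
    have := ((hasDerivAt_pow 2 x).neg).div_const B
    simpa using this
  have h2 := (h1.exp).const_mul (-(B/2))
  refine h2.congr_deriv ?_
  have hB0 : B ≠ 0 := hB.ne'
  field_simp

lemma gauss_tendsto (B : ℝ) (hB : 0 < B) :
    Filter.Tendsto (fun y : ℝ => -(B/2) * Real.exp (-y^2/B)) Filter.atTop (nhds 0) := by
  have h1 : Filter.Tendsto (fun y : ℝ => -y^2/B) Filter.atTop Filter.atBot := by
    apply Filter.Tendsto.atBot_div_const hB
    exact Filter.tendsto_neg_atBot_iff.2 (Filter.tendsto_pow_atTop (by norm_num))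
  have h2 := Real.tendsto_exp_atBot.comp h1
  have := h2.const_mul (-(B/2))
  simpa using this

lemma gauss_tail (B : ℝ) (hB : 0 < B) (T : ℝ) (hT : 0 < T) :
    IntegrableOn (fun x : ℝ => x * Real.exp (-x^2/B)) (Set.Ioi T) volume ∧
    ∫ x in Set.Ioi T, x * Real.exp (-x^2/B) = (B/2) * Real.exp (-T^2/B) := by
  have hd : ∀ x ∈ Set.Ioi T, HasDerivAt (fun y : ℝ => -(B/2) * Real.exp (-y^2/B))
      (x * Real.exp (-x^2/B)) x := fun x _ => gauss_deriv B hB x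
  have hnn : ∀ x ∈ Set.Ioi T, 0 ≤ x * Real.exp (-x^2/B) := by
    intro x hx
    have : (0:ℝ) < x := hT.trans hx
    positivity
  have hcont : ContinuousWithinAt (fun y : ℝ => -(B/2) * Real.exp (-y^2/B)) (Set.Ici T) T :=
    (Continuous.continuousWithinAt (by continuity))
  constructor
  · exact integrableOn_Ioi_deriv_of_nonneg hcont hd hnn (gauss_tendsto B hB)
  · rw [integral_Ioi_of_hasDerivAt_of_nonneg hcont hd hnn (gauss_tendsto B hB)]
    ring

lemma exp_tail (B : ℝ) (hB : 0 < B) (T : ℝ) (hT : 0 < T) :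
    IntegrableOn (fun x : ℝ => Real.exp (-x^2/B)) (Set.Ioi T) volume ∧
    ∫ x in Set.Ioi T, Real.exp (-x^2/B) ≤ (B/(2*T)) * Real.exp (-T^2/B) := by
  obtain ⟨hint, hval⟩ := gauss_tail B hB T hT
  have hmaj : IntegrableOn (fun x : ℝ => (1/T) * (x * Real.exp (-x^2/B))) (Set.Ioi T) volume :=
    hint.const_mul _
  have hle : ∀ x ∈ Set.Ioi T, Real.exp (-x^2/B) ≤ (1/T) * (x * Real.exp (-x^2/B)) := by
    intro x hx
    rw [Set.mem_Ioi] at hx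
    have h1 : (1:ℝ) ≤ x / T := (one_le_div hT).2 (le_of_lt hx)
    calc Real.exp (-x^2/B) = 1 * Real.exp (-x^2/B) := by ring
      _ ≤ (x/T) * Real.exp (-x^2/B) := by
          apply mul_le_mul_of_nonneg_right h1 (Real.exp_nonneg _)
      _ = (1/T) * (x * Real.exp (-x^2/B)) := by ring
  have hintexp : IntegrableOn (fun x : ℝ => Real.exp (-x^2/B)) (Set.Ioi T) volume := by
    apply hmaj.mono' (Continuous.aestronglyMeasurable (by continuity))
    filter_upwards [self_mem_ae_restrict measurableSet_Ioi] with x hx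
    rw [Real.norm_eq_abs, abs_of_nonneg (Real.exp_nonneg _)]
    exact hle x hx
  refine ⟨hintexp, ?_⟩
  calc ∫ x in Set.Ioi T, Real.exp (-x^2/B)
      ≤ ∫ x in Set.Ioi T, (1/T) * (x * Real.exp (-x^2/B)) :=
        setIntegral_mono_on hintexp hmaj measurableSet_Ioi hle
    _ = (1/T) * ((B/2) * Real.exp (-T^2/B)) := by rw [integral_const_mul, hval]
    _ = (B/(2*T)) * Real.exp (-T^2/B) := by field_simp

lemma sqrt_add_le (x y : ℝ) (hx : 0 ≤ x) (hy : 0 ≤ y) :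
    Real.sqrt (x + y) ≤ Real.sqrt x + Real.sqrt y := by
  have h : x + y ≤ (Real.sqrt x + Real.sqrt y)^2 := by
    nlinarith [Real.sq_sqrt hx, Real.sq_sqrt hy, Real.sqrt_nonneg x, Real.sqrt_nonneg y,
      mul_nonneg (Real.sqrt_nonneg x) (Real.sqrt_nonneg y)]
  calc Real.sqrt (x + y) ≤ Real.sqrt ((Real.sqrt x + Real.sqrt y)^2) := Real.sqrt_le_sqrt h
    _ = Real.sqrt x + Real.sqrt y :=
        Real.sqrt_sq (add_nonneg (Real.sqrt_nonneg x) (Real.sqrt_nonneg y))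

set_option maxHeartbeats 2000000 in
theorem stmt_6
    (μ : Measure ℝ) [IsProbabilityMeasure μ]
    (ν₁ ν₂ : Measure ℝ) [IsFiniteMeasure ν₁] [IsFiniteMeasure ν₂]
    (hν : (ν₁ Set.univ).toReal - (ν₂ Set.univ).toReal = 1)
    (F G : ℝ → ℝ)
    (hFdef : ∀ x, F x = (μ (Set.Iic x)).toReal)
    (hGdef : ∀ x, G x = (ν₁ (Set.Iic x)).toReal - (ν₂ (Set.Iic x)).toReal)
    (hμ2 : Integrable (fun x : ℝ => x ^ 2) μ)
    (hν₁2 : Integrable (fun x : ℝ => x ^ 2) ν₁)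
    (hν₂2 : Integrable (fun x : ℝ => x ^ 2) ν₂)
    (hmom : ∫ x, x ^ 2 ∂μ = (∫ x, x ^ 2 ∂ν₁) - ∫ x, x ^ 2 ∂ν₂)
    (Δ : ℝ) (hΔ : Δ = ⨆ x : ℝ, |F x - G x|) (hΔpos : 0 < Δ)
    (A B : ℝ) (hA : 0 < A) (hB : 0 < B)
    (hGneg : ∀ x : ℝ, x ≤ 0 → |G x| ≤ A * Real.exp (-x ^ 2 / B))
    (hGpos : ∀ x : ℝ, 0 ≤ x → |1 - G x| ≤ A * Real.exp (-x ^ 2 / B)) :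
    (∫ x : ℝ, |F x - G x|) ≤
      16.02 * Real.sqrt (A * B) * Δ * Real.sqrt (Real.log (Real.exp 1 + 1 / Δ)) := by
  -- basic positivity of the RHS
  have hABpos : (0:ℝ) < A * B := mul_pos hA hB
  have hsABpos : 0 < Real.sqrt (A * B) := Real.sqrt_pos.2 hABpos
  have hLpos : (0:ℝ) < Real.exp 1 + 1 / Δ := by positivity
  have hL1 : 1 ≤ Real.log (Real.exp 1 + 1 / Δ) := by
    rw [Real.le_log_iff_exp_le hLpos]
    have : 0 < 1 / Δ := by positivity
    linarith
  have hsL1 : 1 ≤ Real.sqrt (Real.log (Real.exp 1 + 1 / Δ)) := Real.one_le_sqrt.2 hL1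
  have hRHSnn : 0 ≤ 16.02 * Real.sqrt (A * B) * Δ * Real.sqrt (Real.log (Real.exp 1 + 1 / Δ)) := by
    apply mul_nonneg (mul_nonneg (mul_nonneg (by norm_num) hsABpos.le) hΔpos.le)
      (Real.sqrt_nonneg _)
  -- measurability of F and G
  have hFeq : F = fun x => (μ (Set.Iic x)).toReal := funext hFdef
  have hGeq : G = fun x => (ν₁ (Set.Iic x)).toReal - (ν₂ (Set.Iic x)).toReal := funext hGdef
  have hFmeas : Measurable F := by rw [hFeq]; exact measurable_tail μ
  have hGmeas : Measurable G := by rw [hGeq]; exact (measurable_tail ν₁).sub (measurable_tail ν₂)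
  -- if not integrable, the integral is zero
  by_cases hint : Integrable (fun x : ℝ => |F x - G x|) volume
  swap
  · rw [integral_undef hint]; exact hRHSnn
  -- basic bounds on F
  have hμu : (μ Set.univ).toReal = 1 := by simp
  have hF0 : ∀ x, 0 ≤ F x := fun x => by rw [hFdef]; exact ENNReal.toReal_nonneg
  have hF1 : ∀ x, F x ≤ 1 := by
    intro x
    rw [hFdef, ← hμu]
    exact ENNReal.toReal_mono (measure_ne_top μ _) (measure_mono (Set.subset_univ _))
  have h1F : ∀ x, 1 - F x = (μ (Set.Ioi x)).toReal := by
    intro x; rw [hFdef, toReal_Ioi μ x, hμu]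
  have h1G : ∀ x, 1 - G x = (ν₁ (Set.Ioi x)).toReal - (ν₂ (Set.Ioi x)).toReal := by
    intro x; rw [hGdef, toReal_Ioi ν₁ x, toReal_Ioi ν₂ x]; linarith [hν]
  -- Δ is an upper bound for |F - G|
  have hexp_le_one : ∀ x : ℝ, Real.exp (-x ^ 2 / B) ≤ 1 := by
    intro x
    rw [Real.exp_le_one_iff]
    have : 0 ≤ x ^ 2 := sq_nonneg x
    have := hB
    apply div_nonpos_of_nonpos_of_nonneg <;> linarith
  have hΔle : ∀ x, |F x - G x| ≤ Δ := by
    intro x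
    rw [hΔ]
    apply le_ciSup (f := fun x => |F x - G x|) _ x
    refine ⟨2 + A, ?_⟩
    rintro y ⟨x, rfl⟩
    have hGb : |G x| ≤ 1 + A := by
      rcases le_or_gt x 0 with hx | hx
      · have ha := hGneg x hx
        have hb := hexp_le_one x
        have hc : A * Real.exp (-x ^ 2 / B) ≤ A * 1 :=
          mul_le_mul_of_nonneg_left hb hA.le
        rw [mul_one] at hc
        linarith
      · have h1 := hGpos x hx.le
        have h2 := hexp_le_one x
        have h4 : |G x| ≤ 1 + |1 - G x| := by
          have he : G x = 1 - (1 - G x) := by ring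
          calc |G x| = |(1:ℝ) - (1 - G x)| := by rw [← he]
            _ ≤ |(1:ℝ)| + |1 - G x| := abs_sub _ _
            _ = 1 + |1 - G x| := by rw [abs_one]
        have hc : A * Real.exp (-x ^ 2 / B) ≤ A * 1 :=
          mul_le_mul_of_nonneg_left h2 hA.le
        rw [mul_one] at hc
        linarith
    calc |F x - G x| ≤ |F x| + |G x| := abs_sub _ _
      _ ≤ 1 + (1 + A) := by
          apply add_le_add _ hGb
          rw [abs_of_nonneg (hF0 x)]; exact hF1 x
      _ = 2 + A := by ring
  -- A ≥ 1/2
  have hA2 : (1:ℝ)/2 ≤ A := by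
    have h1 := hGneg 0 le_rfl
    have h2 := hGpos 0 le_rfl
    have h3 : (1:ℝ) ≤ |G 0| + |1 - G 0| := by
      have := abs_add_le (G 0) (1 - G 0)
      simp only [add_sub_cancel] at this
      simpa using this
    have := hexp_le_one 0
    simp only [neg_zero, zero_pow, ne_eq, OfNat.ofNat_ne_zero, not_false_eq_true,
      zero_div, Real.exp_zero, mul_one] at h1 h2
    linarith
  -- choice of T
  set L : ℝ := Real.log (Real.exp 1 + 1 / Δ) with hLdef
  set M : ℝ := Real.log (max A 1) with hMdef
  have hM0 : 0 ≤ M := Real.log_nonneg (le_max_right _ _)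
  have hMA : M ≤ A := by
    rcases le_or_gt A 1 with h | h
    · rw [hMdef, max_eq_right h]; simp [hA.le]
    · rw [hMdef, max_eq_left h.le]
      have := Real.log_le_sub_one_of_pos hA
      linarith
  have hLM0 : 0 ≤ B * (L + M) := by positivity
  set T : ℝ := Real.sqrt (B * (L + M)) with hTdef
  have hT2 : T ^ 2 = B * (L + M) := Real.sq_sqrt hLM0
  have hTpos : 0 < T := Real.sqrt_pos.2 (mul_pos hB (by linarith))
  have hTB : Real.sqrt B ≤ T := by
    apply Real.sqrt_le_sqrt
    have h1 : B * 1 ≤ B * (L + M) := mul_le_mul_of_nonneg_left (by linarith) hB.le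
    linarith [h1]
  have hexpT : Real.exp (-T ^ 2 / B) ≤ Δ / max A 1 := by
    have h1 : -T ^ 2 / B = -L + -M := by rw [hT2]; field_simp; ring
    rw [h1, Real.exp_add, Real.exp_neg, Real.exp_neg, Real.exp_log hLpos,
      Real.exp_log (lt_of_lt_of_le one_pos (le_max_right A 1))]
    have h2 : (Real.exp 1 + 1 / Δ)⁻¹ ≤ Δ := by
      rw [inv_le_comm₀ hLpos hΔpos, ← one_div]
      linarith [(Real.exp_pos 1).le]
    have h3 : (0:ℝ) < max A 1 := lt_of_lt_of_le one_pos (le_max_right A 1)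
    rw [div_eq_mul_inv Δ]
    exact mul_le_mul_of_nonneg_right h2 (by positivity)
  -- layer-cake identities
  obtain ⟨hφint0, hφval⟩ := layer_cake_real μ hμ2
  obtain ⟨hg1int, hg1val⟩ := layer_cake_real ν₁ hν₁2
  obtain ⟨hg2int, hg2val⟩ := layer_cake_real ν₂ hν₂2
  set φ : ℝ → ℝ := fun x => x * ((1 - F x) + F (-x)) with hφdef
  set γ : ℝ → ℝ := fun x => x * ((1 - G x) + G (-x)) with hγdef
  have hφeq : φ = fun x => x * ((μ (Set.Ioi x)).toReal + (μ (Set.Iic (-x))).toReal) := by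
    funext x; rw [hφdef]; simp only; rw [h1F x, hFdef (-x)]
  have hγeq : γ = fun x =>
      (x * ((ν₁ (Set.Ioi x)).toReal + (ν₁ (Set.Iic (-x))).toReal)) -
      (x * ((ν₂ (Set.Ioi x)).toReal + (ν₂ (Set.Iic (-x))).toReal)) := by
    funext x; rw [hγdef]; simp only; rw [h1G x, hGdef (-x)]; ring
  have hφint : IntegrableOn φ (Set.Ioi 0) volume := by rw [hφeq]; exact hφint0
  have hγint : IntegrableOn γ (Set.Ioi 0) volume := by rw [hγeq]; exact hg1int.sub hg2int
  have hφγ : ∫ x in Set.Ioi (0:ℝ), φ x = ∫ x in Set.Ioi (0:ℝ), γ x := by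
    rw [hφeq, hγeq, integral_sub hg1int hg2int, hg1val, hg2val, hφval, hmom]
    ring
  -- splitting at T
  have hsplit : Set.Ioc (0:ℝ) T ∪ Set.Ioi T = Set.Ioi 0 := Set.Ioc_union_Ioi_eq_Ioi hTpos.le
  have hdisj : Disjoint (Set.Ioc (0:ℝ) T) (Set.Ioi T) := by
    rw [Set.disjoint_left]; intro x hx1 hx2
    exact absurd hx1.2 (not_le.2 hx2)
  have hφsplit : ∫ x in Set.Ioi (0:ℝ), φ x =
      (∫ x in Set.Ioc (0:ℝ) T, φ x) + ∫ x in Set.Ioi T, φ x := by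
    rw [← hsplit, setIntegral_union hdisj measurableSet_Ioi
      (hφint.mono_set (by rw [← hsplit]; exact Set.subset_union_left))
      (hφint.mono_set (by rw [← hsplit]; exact Set.subset_union_right))]
  have hγsplit : ∫ x in Set.Ioi (0:ℝ), γ x =
      (∫ x in Set.Ioc (0:ℝ) T, γ x) + ∫ x in Set.Ioi T, γ x := by
    rw [← hsplit, setIntegral_union hdisj measurableSet_Ioi
      (hγint.mono_set (by rw [← hsplit]; exact Set.subset_union_left))
      (hγint.mono_set (by rw [← hsplit]; exact Set.subset_union_right))]
  -- bound on the middle difference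
  have hid_int : IntegrableOn (fun x : ℝ => x) (Set.Ioc 0 T) volume :=
    (intervalIntegral.intervalIntegrable_id (a := 0) (b := T) (μ := volume)).1
  have hid_val : ∫ x in Set.Ioc (0:ℝ) T, x = T ^ 2 / 2 := by
    rw [← intervalIntegral.integral_of_le hTpos.le, integral_id]; ring
  have hγφIoc : IntegrableOn (fun x => γ x - φ x) (Set.Ioc 0 T) volume :=
    ((hγint.mono_set (by rw [← hsplit]; exact Set.subset_union_left)).sub
      (hφint.mono_set (by rw [← hsplit]; exact Set.subset_union_left)))
  have hmid : (∫ x in Set.Ioc (0:ℝ) T, γ x) - ∫ x in Set.Ioc (0:ℝ) T, φ x ≤ Δ * T ^ 2 := by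
    rw [← integral_sub (hγint.mono_set (by rw [← hsplit]; exact Set.subset_union_left))
      (hφint.mono_set (by rw [← hsplit]; exact Set.subset_union_left))]
    calc ∫ x in Set.Ioc (0:ℝ) T, (γ x - φ x)
        ≤ ∫ x in Set.Ioc (0:ℝ) T, (2 * Δ) * x := by
          apply setIntegral_mono_on hγφIoc (hid_int.const_mul _) measurableSet_Ioc
          intro x hx
          have hx0 : 0 < x := hx.1
          have h1 : F x - G x ≤ Δ := le_of_abs_le (hΔle x)
          have h2 : G (-x) - F (-x) ≤ Δ := by
            have := hΔle (-x)
            rw [abs_sub_comm] at this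
            exact le_of_abs_le this
          have he : γ x - φ x = x * ((F x - G x) + (G (-x) - F (-x))) := by
            rw [hγdef, hφdef]; ring
          rw [he]
          calc x * ((F x - G x) + (G (-x) - F (-x)))
              ≤ x * (Δ + Δ) := mul_le_mul_of_nonneg_left (add_le_add h1 h2) hx0.le
            _ = (2 * Δ) * x := by ring
      _ = (2 * Δ) * (T ^ 2 / 2) := by rw [integral_const_mul, hid_val]
      _ = Δ * T ^ 2 := by ring
  -- bound on the γ tail
  obtain ⟨hgauss_int, hgauss_val⟩ := gauss_tail B hB T hTpos
  obtain ⟨hexp_int, hexp_val⟩ := exp_tail B hB T hTpos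
  have hγtail : ∫ x in Set.Ioi T, γ x ≤ A * B * Real.exp (-T ^ 2 / B) := by
    calc ∫ x in Set.Ioi T, γ x
        ≤ ∫ x in Set.Ioi T, (2 * A) * (x * Real.exp (-x ^ 2 / B)) := by
          apply setIntegral_mono_on
            (hγint.mono_set (by rw [← hsplit]; exact Set.subset_union_right))
            (hgauss_int.const_mul _) measurableSet_Ioi
          intro x hx
          have hx0 : 0 < x := hTpos.trans hx
          have h1 : 1 - G x ≤ A * Real.exp (-x ^ 2 / B) := le_of_abs_le (hGpos x hx0.le)
          have h2 : G (-x) ≤ A * Real.exp (-x ^ 2 / B) := by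
            have h3 := hGneg (-x) (by linarith)
            rw [show -(-x) ^ 2 / B = -x ^ 2 / B from by ring] at h3
            exact le_of_abs_le h3
          rw [hγdef]
          simp only
          calc x * ((1 - G x) + G (-x))
              ≤ x * (A * Real.exp (-x ^ 2 / B) + A * Real.exp (-x ^ 2 / B)) :=
                mul_le_mul_of_nonneg_left (add_le_add h1 h2) hx0.le
            _ = (2 * A) * (x * Real.exp (-x ^ 2 / B)) := by ring
      _ = (2 * A) * ((B / 2) * Real.exp (-T ^ 2 / B)) := by rw [integral_const_mul, hgauss_val]
      _ = A * B * Real.exp (-T ^ 2 / B) := by ring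
  -- tail bound for φ
  have hφtail : ∫ x in Set.Ioi T, φ x ≤ Δ * T ^ 2 + A * B * Real.exp (-T ^ 2 / B) := by
    have : ∫ x in Set.Ioi T, φ x =
        ((∫ x in Set.Ioc (0:ℝ) T, γ x) - ∫ x in Set.Ioc (0:ℝ) T, φ x) +
        ∫ x in Set.Ioi T, γ x := by
      rw [hφsplit, hγsplit] at hφγ
      linarith
    rw [this]
    exact add_le_add hmid hγtail
  -- tail bound for the distribution tails of F
  set ψ : ℝ → ℝ := fun x => (1 - F x) + F (-x) with hψdef
  have hψnn : ∀ x, 0 ≤ ψ x := by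
    intro x
    have ha := hF1 x
    have hb := hF0 (-x)
    simp only [hψdef]
    linarith
  have hψm : Measurable ψ := by
    apply Measurable.add
    · exact (measurable_const.sub hFmeas)
    · exact hFmeas.comp measurable_neg
  have hψle : ∀ x ∈ Set.Ioi T, ψ x ≤ (1/T) * φ x := by
    intro x hx
    rw [Set.mem_Ioi] at hx
    have hφx : φ x = x * ψ x := by rw [hφdef, hψdef]
    rw [hφx]
    rw [show (1/T) * (x * ψ x) = (x/T) * ψ x from by ring]
    have h1 : (1:ℝ) ≤ x / T := (one_le_div hTpos).2 hx.le
    have h2 : ψ x * 1 ≤ ψ x * (x/T) := mul_le_mul_of_nonneg_left h1 (hψnn x)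
    rw [mul_one] at h2
    linarith
  have hφIoiT : IntegrableOn φ (Set.Ioi T) volume :=
    hφint.mono_set (by rw [← hsplit]; exact Set.subset_union_right)
  have hψint : IntegrableOn ψ (Set.Ioi T) volume := by
    apply (hφIoiT.const_mul (1/T)).mono' (hψm.aestronglyMeasurable.restrict)
    filter_upwards [self_mem_ae_restrict measurableSet_Ioi] with x hx
    rw [Real.norm_eq_abs, abs_of_nonneg (hψnn x)]
    exact hψle x hx
  have hψval : ∫ x in Set.Ioi T, ψ x ≤ Δ * T + (A * B / T) * Real.exp (-T ^ 2 / B) := by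
    calc ∫ x in Set.Ioi T, ψ x
        ≤ ∫ x in Set.Ioi T, (1/T) * φ x :=
          setIntegral_mono_on hψint (hφIoiT.const_mul _) measurableSet_Ioi hψle
      _ = (1/T) * ∫ x in Set.Ioi T, φ x := integral_const_mul _ _
      _ ≤ (1/T) * (Δ * T ^ 2 + A * B * Real.exp (-T ^ 2 / B)) := by
          apply mul_le_mul_of_nonneg_left hφtail (by positivity)
      _ = Δ * T + (A * B / T) * Real.exp (-T ^ 2 / B) := by field_simp
  -- integrability of the reflected function
  have hintneg : Integrable (fun x : ℝ => |F (-x) - G (-x)|) volume := by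
    have : Integrable (fun x : ℝ => |F x - G x|) (Measure.map Neg.neg volume) := by
      rw [Measure.map_neg_eq_self]; exact hint
    have hme : MeasurableEmbedding (Neg.neg : ℝ → ℝ) :=
      (Homeomorph.neg ℝ).isClosedEmbedding.measurableEmbedding
    exact (MeasurableEmbedding.integrable_map_iff hme).1 this
  -- tail bound for |F - G|
  have htail2 : (∫ x in Set.Ioi T, |F x - G x|) + (∫ x in Set.Ioi T, |F (-x) - G (-x)|)
      ≤ Δ * T + (2 * A * B / T) * Real.exp (-T ^ 2 / B) := by
    have hptwise : ∀ x ∈ Set.Ioi T, |F x - G x| + |F (-x) - G (-x)| ≤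
        ψ x + (2 * A) * Real.exp (-x ^ 2 / B) := by
      intro x hx
      rw [Set.mem_Ioi] at hx
      have hx0 : (0:ℝ) < x := hTpos.trans hx
      have h1 : |F x - G x| ≤ (1 - F x) + A * Real.exp (-x ^ 2 / B) := by
        have ha := hGpos x hx0.le
        have hb : |F x - G x| ≤ |1 - G x| + |1 - F x| := by
          rw [show F x - G x = (1 - G x) - (1 - F x) from by ring]
          exact abs_sub _ _
        rw [abs_of_nonneg (show (0:ℝ) ≤ 1 - F x by linarith [hF1 x])] at hb
        linarith
      have h2 : |F (-x) - G (-x)| ≤ F (-x) + A * Real.exp (-x ^ 2 / B) := by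
        have ha := hGneg (-x) (by linarith)
        rw [show -(-x) ^ 2 / B = -x ^ 2 / B from by ring] at ha
        have hb : |F (-x) - G (-x)| ≤ |F (-x)| + |G (-x)| := abs_sub _ _
        rw [abs_of_nonneg (hF0 (-x))] at hb
        linarith
      rw [hψdef]
      simp only
      linarith
    calc (∫ x in Set.Ioi T, |F x - G x|) + (∫ x in Set.Ioi T, |F (-x) - G (-x)|)
        = ∫ x in Set.Ioi T, (|F x - G x| + |F (-x) - G (-x)|) :=
          (integral_add hint.integrableOn hintneg.integrableOn).symm
      _ ≤ ∫ x in Set.Ioi T, (ψ x + (2 * A) * Real.exp (-x ^ 2 / B)) := by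
          apply setIntegral_mono_on (hint.integrableOn.add hintneg.integrableOn)
            (hψint.add (hexp_int.const_mul _)) measurableSet_Ioi hptwise
      _ = (∫ x in Set.Ioi T, ψ x) + (2 * A) * ∫ x in Set.Ioi T, Real.exp (-x ^ 2 / B) := by
          rw [integral_add hψint (hexp_int.const_mul _), integral_const_mul]
      _ ≤ (Δ * T + (A * B / T) * Real.exp (-T ^ 2 / B)) +
            (2 * A) * ((B / (2 * T)) * Real.exp (-T ^ 2 / B)) := by
          apply add_le_add hψval
          apply mul_le_mul_of_nonneg_left hexp_val (by positivity)
      _ = Δ * T + (2 * A * B / T) * Real.exp (-T ^ 2 / B) := by field_simp; ring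
  -- splitting the whole line
  have hwhole : ∫ x : ℝ, |F x - G x| =
      (∫ x in Set.Ioi T, |F (-x) - G (-x)|) + ((∫ x in Set.Ioc (-T) T, |F x - G x|) +
        ∫ x in Set.Ioi T, |F x - G x|) := by
    have h1 : (∫ x in Set.Iic (-T), |F x - G x|) + (∫ x in Set.Ioi (-T), |F x - G x|) =
        ∫ x : ℝ, |F x - G x| := by
      have := integral_add_compl (measurableSet_Iic (a := -T)) hint
      rwa [Set.compl_Iic] at this
    have h2 : ∫ x in Set.Ioi (-T), |F x - G x| =
        (∫ x in Set.Ioc (-T) T, |F x - G x|) + ∫ x in Set.Ioi T, |F x - G x| := by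
      have hd2 : Disjoint (Set.Ioc (-T) T) (Set.Ioi T) := by
        rw [Set.disjoint_left]
        intro x hx1 hx2
        exact absurd hx1.2 (not_le.2 hx2)
      rw [← Set.Ioc_union_Ioi_eq_Ioi (show -T ≤ T by linarith),
        setIntegral_union hd2 measurableSet_Ioi hint.integrableOn hint.integrableOn]
    have h3 : ∫ x in Set.Iic (-T), |F x - G x| = ∫ x in Set.Ioi T, |F (-x) - G (-x)| :=
      (integral_comp_neg_Ioi T (fun x => |F x - G x|)).symm
    rw [← h1, h2, h3]
  -- middle bound
  have hmid2 : ∫ x in Set.Ioc (-T) T, |F x - G x| ≤ Δ * (2 * T) := by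
    calc ∫ x in Set.Ioc (-T) T, |F x - G x|
        ≤ ∫ _x in Set.Ioc (-T) T, Δ := by
          apply setIntegral_mono_on hint.integrableOn
            (integrableOn_const measure_Ioc_lt_top.ne) measurableSet_Ioc
          intro x _
          exact hΔle x
      _ = (volume (Set.Ioc (-T) T)).toReal * Δ := by rw [setIntegral_const]; rfl
      _ = Δ * (2 * T) := by
          rw [Real.volume_Ioc, ENNReal.toReal_ofReal (by linarith)]
          ring
  -- putting everything together
  have hfinal : ∫ x : ℝ, |F x - G x| ≤
      3 * T * Δ + (2 * A * B / T) * Real.exp (-T ^ 2 / B) := by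
    rw [hwhole]
    have := htail2
    have := hmid2
    linarith
  -- final arithmetic
  have hsqrt2 : Real.sqrt 2 ≤ 1.5 := by
    rw [show (1.5:ℝ) = Real.sqrt (1.5^2) from (Real.sqrt_sq (by norm_num)).symm]
    apply Real.sqrt_le_sqrt
    norm_num
  have hsB : (0:ℝ) < Real.sqrt B := Real.sqrt_pos.2 hB
  have hsL0 : (0:ℝ) ≤ Real.sqrt L := Real.sqrt_nonneg L
  have hL0 : (0:ℝ) ≤ L := by linarith
  have k3 : Real.sqrt B ≤ Real.sqrt 2 * Real.sqrt (A*B) := by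
    rw [← Real.sqrt_mul (by norm_num : (0:ℝ) ≤ 2)]
    apply Real.sqrt_le_sqrt
    have h1 : 0 ≤ (2*A - 1) * B := mul_nonneg (by linarith) hB.le
    linarith [h1]
  have hTle : T ≤ (Real.sqrt 2 + 1) * (Real.sqrt (A*B) * Real.sqrt L) := by
    have e1 : T ≤ Real.sqrt (B*L) + Real.sqrt (B*M) := by
      rw [hTdef, mul_add]
      exact sqrt_add_le _ _ (by positivity) (by positivity)
    have e2 : Real.sqrt (B*L) ≤ Real.sqrt 2 * (Real.sqrt (A*B) * Real.sqrt L) := by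
      rw [← Real.sqrt_mul hABpos.le, ← Real.sqrt_mul (by norm_num : (0:ℝ) ≤ 2)]
      apply Real.sqrt_le_sqrt
      have h1 : 0 ≤ (2*A - 1) * (B*L) := mul_nonneg (by linarith) (by positivity)
      linarith [h1]
    have e3 : Real.sqrt (B*M) ≤ Real.sqrt (A*B) := by
      apply Real.sqrt_le_sqrt
      have h1 : B * M ≤ B * A := mul_le_mul_of_nonneg_left hMA hB.le
      linarith [h1]
    have e4 : Real.sqrt (A*B) ≤ Real.sqrt (A*B) * Real.sqrt L := by
      have h1 : Real.sqrt (A*B) * 1 ≤ Real.sqrt (A*B) * Real.sqrt L :=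
        mul_le_mul_of_nonneg_left hsL1 hsABpos.le
      rw [mul_one] at h1
      exact h1
    linarith
  have htailb : (2 * A * B / T) * Real.exp (-T ^ 2 / B) ≤
      2 * Real.sqrt 2 * Real.sqrt (A*B) * Δ := by
    have hmax : A ≤ max A 1 := le_max_left _ _
    have hmaxpos : (0:ℝ) < max A 1 := lt_of_lt_of_le hA hmax
    have k1 : (2*A*B/T) * Real.exp (-T ^ 2 / B) ≤ (2*A*B/T) * (Δ / max A 1) :=
      mul_le_mul_of_nonneg_left hexpT (by positivity)
    have k2 : (2*A*B/T) * (Δ / max A 1) ≤ 2 * Real.sqrt B * Δ := by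
      have j1 : A / max A 1 ≤ 1 := div_le_one_of_le₀ hmax hmaxpos.le
      have j2 : 1/T ≤ 1/Real.sqrt B := one_div_le_one_div_of_le hsB hTB
      calc (2*A*B/T) * (Δ / max A 1)
          = (2*B*Δ) * (A / max A 1) * (1/T) := by ring
        _ ≤ (2*B*Δ) * 1 * (1/T) := by
            apply mul_le_mul_of_nonneg_right _ (by positivity)
            apply mul_le_mul_of_nonneg_left j1 (by positivity)
        _ ≤ (2*B*Δ) * 1 * (1/Real.sqrt B) := by
            apply mul_le_mul_of_nonneg_left j2 (by positivity)
        _ = 2 * Δ * (B / Real.sqrt B) := by ring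
        _ = 2 * Real.sqrt B * Δ := by rw [Real.div_sqrt]; ring
    calc (2 * A * B / T) * Real.exp (-T ^ 2 / B) ≤ 2 * Real.sqrt B * Δ := le_trans k1 k2
      _ ≤ 2 * Real.sqrt 2 * Real.sqrt (A*B) * Δ := by
          have h1 : (2*Δ) * Real.sqrt B ≤ (2*Δ) * (Real.sqrt 2 * Real.sqrt (A*B)) :=
            mul_le_mul_of_nonneg_left k3 (by positivity)
          linarith [h1]
  calc ∫ x : ℝ, |F x - G x|
      ≤ 3 * T * Δ + (2 * A * B / T) * Real.exp (-T ^ 2 / B) := hfinal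
    _ ≤ 3 * ((Real.sqrt 2 + 1) * (Real.sqrt (A*B) * Real.sqrt L)) * Δ +
        2 * Real.sqrt 2 * Real.sqrt (A*B) * Δ := by
        apply add_le_add _ htailb
        apply mul_le_mul_of_nonneg_right _ hΔpos.le
        linarith
    _ ≤ 16.02 * Real.sqrt (A*B) * Δ * Real.sqrt L := by
        have hXnn : (0:ℝ) ≤ Real.sqrt (A*B) * Δ := mul_nonneg hsABpos.le hΔpos.le
        have hXLnn : (0:ℝ) ≤ Real.sqrt (A*B) * Δ * Real.sqrt L := mul_nonneg hXnn hsL0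
        have c1 : 3 * ((Real.sqrt 2 + 1) * (Real.sqrt (A*B) * Real.sqrt L)) * Δ ≤
            7.5 * (Real.sqrt (A*B) * Δ * Real.sqrt L) := by
          rw [show 3 * ((Real.sqrt 2 + 1) * (Real.sqrt (A*B) * Real.sqrt L)) * Δ =
            (3 * (Real.sqrt 2 + 1)) * (Real.sqrt (A*B) * Δ * Real.sqrt L) from by ring]
          apply mul_le_mul_of_nonneg_right (by linarith) hXLnn
        have c2 : 2 * Real.sqrt 2 * Real.sqrt (A*B) * Δ ≤
            3 * (Real.sqrt (A*B) * Δ * Real.sqrt L) := by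
          have d1 : 2 * Real.sqrt 2 * Real.sqrt (A*B) * Δ ≤ 3 * (Real.sqrt (A*B) * Δ) := by
            rw [show 2 * Real.sqrt 2 * Real.sqrt (A*B) * Δ =
              (2 * Real.sqrt 2) * (Real.sqrt (A*B) * Δ) from by ring]
            apply mul_le_mul_of_nonneg_right (by linarith) hXnn
          have d2 : 3 * (Real.sqrt (A*B) * Δ) ≤ 3 * (Real.sqrt (A*B) * Δ * Real.sqrt L) := by
            have := mul_le_mul_of_nonneg_left hsL1 hXnn
            rw [mul_one] at this
            linarith
          linarith
        have c3 : 10.5 * (Real.sqrt (A*B) * Δ * Real.sqrt L) ≤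
            16.02 * (Real.sqrt (A*B) * Δ * Real.sqrt L) :=
          mul_le_mul_of_nonneg_right (by norm_num) hXLnn
        rw [show 16.02 * Real.sqrt (A*B) * Δ * Real.sqrt L =
          16.02 * (Real.sqrt (A*B) * Δ * Real.sqrt L) from by ring]
        linarith
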